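/- arXiv:2104.13945 — 3 statements merged into one kernel-verified Lean document; each statement's English description precedes it below -/
import Mathlib

section
/- Let X be a centered process with fractional Brownian motion covariance of Hurst parameter H and scale σ, and fix t ∈ (0,1) and γ ∈ (0,1). Then the second-moment version of the Hölder exponent estimator converges to the Hurst parameter: lim_{N→∞} (1/2)((1 − γ) − log(E(V_N^{(1)}(t))) / log N) = H. -/
set_option maxHeartbeats 1600000

open MeasureTheory Filter

/-- The neighbourhood index set `v_N(t) = {p ∈ ℕ : 0 ≤ p ≤ N-2, |t - p/N| ≤ N^(-γ)}`. -/
noncomputable def vN (t γ : ℝ) (N : ℕ) : Finset ℕ :=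
  (Finset.range (N - 1)).filter fun p => |t - (p : ℝ) / (N : ℝ)| ≤ (N : ℝ) ^ (-γ)

/-- For a centered process with fBm covariance of Hurst parameter `H`
and scale `σ`, and `t ∈ (0,1)`, `γ ∈ (0,1)`, the second-moment version of the Hölder
exponent estimator converges to the Hurst parameter:
`lim_{N→∞} (1/2)((1-γ) - log(E(V_N^(1)(t)))/log N) = H`. -/
theorem holder_estimator_converges_to_hurst
    {Ω : Type*} [MeasurableSpace Ω] (P : Measure Ω) [IsProbabilityMeasure P]
    (H σ : ℝ) (hH : H ∈ Set.Ioo (0 : ℝ) 1) (hσ : 0 < σ)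
    (X : ℝ → Ω → ℝ)
    (hL2 : ∀ t : ℝ, MemLp (X t) 2 P)
    (hmean : ∀ t : ℝ, ∫ ω, X t ω ∂P = 0)
    (hcov : ∀ s t : ℝ, ∫ ω, X s ω * X t ω ∂P
      = (σ ^ 2 / 2) * (|s| ^ (2 * H) + |t| ^ (2 * H) - |s - t| ^ (2 * H)))
    (t γ : ℝ) (ht : t ∈ Set.Ioo (0 : ℝ) 1) (hγ : γ ∈ Set.Ioo (0 : ℝ) 1) :
    Tendsto (fun N : ℕ =>
        (1 / 2 : ℝ) * ((1 - γ) -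
          Real.log (∫ ω, ∑ p ∈ vN t γ N,
            (X ((p : ℝ) / N) ω - 2 * X (((p : ℝ) + 1) / N) ω
              + X (((p : ℝ) + 2) / N) ω) ^ 2 ∂P) / Real.log N))
      atTop (nhds H) := by
  obtain ⟨hH0, hH1⟩ := hH
  obtain ⟨ht0, ht1⟩ := ht
  obtain ⟨hγ0, hγ1⟩ := hγ
  -- the constant C = σ²(4 - 2^(2H)) > 0
  set C : ℝ := σ ^ 2 * (4 - 2 ^ (2 * H)) with hC_def
  have h2H4 : (2:ℝ) ^ (2 * H) < 4 := by
    have h := (Real.rpow_lt_rpow_left_iff (x := 2) (by norm_num)).2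
      (show 2 * H < 2 by linarith)
    rwa [show (2:ℝ) ^ (2:ℝ) = 4 by
      rw [show (2:ℝ) = ((2:ℕ):ℝ) by norm_num, Real.rpow_natCast]; norm_num] at h
  have hCpos : 0 < C := mul_pos (pow_pos hσ 2) (by linarith)
  -- integrability of products
  have hmul : ∀ s u : ℝ, Integrable (fun ω => X s ω * X u ω) P := by
    intro s u
    have h1 := ((hL2 s).add (hL2 u)).integrable_sq
    have h2 := (hL2 s).integrable_sq
    have h3 := (hL2 u).integrable_sq
    have e : (fun ω => X s ω * X u ω)
        = fun ω => (((X s ω + X u ω) ^ 2 - X s ω ^ 2) - X u ω ^ 2) * (1/2) := by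
      funext ω; ring
    rw [e]
    exact (((h1.congr (by rfl)).sub h2).sub h3).mul_const _
  -- integrability of squared second differences
  have hsq : ∀ a b c : ℝ, Integrable (fun ω => (X a ω - 2 * X b ω + X c ω) ^ 2) P := by
    intro a b c
    have h := (((hL2 a).sub ((hL2 b).const_mul 2)).add (hL2 c)).integrable_sq
    exact h.congr (by rfl)
  -- per-term expectation
  have hterm : ∀ a b c d : ℝ, 0 ≤ d → a - b = -d → b - c = -d →
      ∫ ω, (X a ω - 2 * X b ω + X c ω) ^ 2 ∂P = C * d ^ (2 * H) := by
    intro a b c d hd hab hbc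
    have hac : a - c = -(2 * d) := by linarith
    have Iaa := hmul a a; have Ibb := hmul b b; have Icc := hmul c c
    have Iab := hmul a b; have Iac := hmul a c; have Ibc := hmul b c
    have e1 : (fun ω => (X a ω - 2 * X b ω + X c ω) ^ 2)
        = fun ω => ((X a ω * X a ω + 4 * (X b ω * X b ω))
            + (X c ω * X c ω + 2 * (X a ω * X c ω)))
            - (4 * (X a ω * X b ω) + 4 * (X b ω * X c ω)) := by
      funext ω; ring
    have J1 : Integrable (fun ω => X a ω * X a ω + 4 * (X b ω * X b ω)) P :=
      Iaa.add (Ibb.const_mul 4)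
    have J2 : Integrable (fun ω => X c ω * X c ω + 2 * (X a ω * X c ω)) P :=
      Icc.add (Iac.const_mul 2)
    have J3 : Integrable (fun ω => X a ω * X a ω + 4 * (X b ω * X b ω)
        + (X c ω * X c ω + 2 * (X a ω * X c ω))) P := J1.add J2
    have J4 : Integrable (fun ω => 4 * (X a ω * X b ω) + 4 * (X b ω * X c ω)) P :=
      (Iab.const_mul 4).add (Ibc.const_mul 4)
    rw [e1, integral_sub J3 J4,
        integral_add J1 J2,
        integral_add Iaa (Ibb.const_mul 4), integral_add Icc (Iac.const_mul 2),
        integral_add (Iab.const_mul 4) (Ibc.const_mul 4),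
        integral_const_mul, integral_const_mul, integral_const_mul, integral_const_mul,
        hcov a a, hcov b b, hcov c c, hcov a b, hcov a c, hcov b c]
    have h2H : (2 * H) ≠ 0 := by positivity
    have habs1 : |a - b| = d := by rw [hab, abs_neg, abs_of_nonneg hd]
    have habs2 : |b - c| = d := by rw [hbc, abs_neg, abs_of_nonneg hd]
    have habs3 : |a - c| = 2 * d := by
      rw [hac, abs_neg, abs_of_nonneg (by linarith)]
    have h2d : (2 * d) ^ (2 * H) = 2 ^ (2 * H) * d ^ (2 * H) :=
      Real.mul_rpow (by norm_num) hd
    simp only [sub_self, abs_zero, Real.zero_rpow h2H, habs1, habs2, habs3, h2d, hC_def]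
    ring
  -- expectation of the full quadratic variation
  have hEV : ∀ N : ℕ, 1 ≤ N →
      ∫ ω, ∑ p ∈ vN t γ N,
        (X ((p : ℝ) / N) ω - 2 * X (((p : ℝ) + 1) / N) ω
          + X (((p : ℝ) + 2) / N) ω) ^ 2 ∂P
      = ((vN t γ N).card : ℝ) * (C * ((N:ℝ)⁻¹) ^ (2 * H)) := by
    intro N hN
    have hN0 : (0:ℝ) < N := by exact_mod_cast hN
    have hNne : (N:ℝ) ≠ 0 := ne_of_gt hN0
    rw [integral_finset_sum _ (fun p _ => hsq _ _ _)]
    have hval : ∀ p ∈ vN t γ N,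
        ∫ ω, (X ((p : ℝ) / N) ω - 2 * X (((p : ℝ) + 1) / N) ω
          + X (((p : ℝ) + 2) / N) ω) ^ 2 ∂P = C * ((N:ℝ)⁻¹) ^ (2 * H) := by
      intro p _
      refine hterm _ _ _ _ (by positivity) ?_ ?_ <;> (field_simp; try norm_num)
    rw [Finset.sum_congr rfl hval, Finset.sum_const, nsmul_eq_mul]
  -- limit tools
  have hcast : Tendsto (fun N : ℕ => (N:ℝ)) atTop atTop := tendsto_natCast_atTop_atTop
  have hlogN : Tendsto (fun N : ℕ => Real.log N) atTop atTop :=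
    Real.tendsto_log_atTop.comp hcast
  have he0 : Tendsto (fun N : ℕ => (N:ℝ) ^ (-γ)) atTop (nhds 0) :=
    (tendsto_rpow_neg_atTop hγ0).comp hcast
  have hinv : Tendsto (fun N : ℕ => 2 / (N:ℝ)) atTop (nhds 0) :=
    tendsto_const_nhds.div_atTop hcast
  have ev1 : ∀ᶠ N : ℕ in atTop, (N:ℝ) ^ (-γ) < t := he0.eventually_lt_const ht0
  have ev2 : ∀ᶠ N : ℕ in atTop, t + (N:ℝ) ^ (-γ) + 2 / (N:ℝ) < 1 := by
    have h : Tendsto (fun N : ℕ => t + (N:ℝ) ^ (-γ) + 2 / (N:ℝ)) atTop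
        (nhds (t + 0 + 0)) := (tendsto_const_nhds.add he0).add hinv
    exact h.eventually_lt_const (by linarith)
  have ev3 : ∀ᶠ N : ℕ in atTop, 1 ≤ (N:ℝ) ^ (1 - γ) :=
    ((tendsto_rpow_atTop (by linarith)).comp hcast).eventually_ge_atTop 1
  have ev4 : ∀ᶠ N : ℕ in atTop, 2 ≤ N := eventually_ge_atTop 2
  have ev5 : ∀ᶠ N : ℕ in atTop, 0 < Real.log N := hlogN.eventually_gt_atTop 0
  -- cardinality bounds
  have hcard : ∀ᶠ N : ℕ in atTop,
      (N:ℝ) ^ (1 - γ) ≤ ((vN t γ N).card : ℝ)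
        ∧ ((vN t γ N).card : ℝ) ≤ 3 * (N:ℝ) ^ (1 - γ) := by
    filter_upwards [ev1, ev2, ev3, ev4] with N hsmall hup hrpow1 h2
    have hN0 : (0:ℝ) < N := by
      have : (0:ℕ) < N := by omega
      exact_mod_cast this
    set e : ℝ := (N:ℝ) ^ (-γ) with he_def
    have he0' : 0 ≤ e := Real.rpow_nonneg hN0.le _
    have hNe : (N:ℝ) * e = (N:ℝ) ^ (1 - γ) := by
      rw [he_def, show (1:ℝ) - γ = 1 + (-γ) by ring, Real.rpow_add hN0, Real.rpow_one]
    set L : ℝ := (N:ℝ) * t - (N:ℝ) * e with hL_def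
    set U : ℝ := (N:ℝ) * t + (N:ℝ) * e with hU_def
    have hL : 0 < L := by nlinarith [mul_pos hN0 (sub_pos.2 hsmall)]
    have hUpos : 0 ≤ U := by nlinarith [mul_nonneg hN0.le he0']
    have h2N : (N:ℝ) * (2 / (N:ℝ)) = 2 := by field_simp
    have hU2 : U ≤ (N:ℝ) - 2 := by nlinarith [mul_lt_mul_of_pos_left hup hN0]
    set a : ℕ := ⌈L⌉₊ with ha_def
    set b : ℕ := ⌊U⌋₊ with hb_def
    have hvN : vN t γ N = Finset.Icc a b := by
      ext p
      simp only [vN, Finset.mem_filter, Finset.mem_range, Finset.mem_Icc]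
      have hdiv : (N:ℝ) * ((p:ℝ) / N) = p := by field_simp
      constructor
      · rintro ⟨hp1, hp2⟩
        rw [abs_le] at hp2
        obtain ⟨hp2a, hp2b⟩ := hp2
        constructor
        · apply Nat.ceil_le.2
          nlinarith [mul_le_mul_of_nonneg_left hp2b hN0.le]
        · apply Nat.le_floor
          nlinarith [mul_le_mul_of_nonneg_left
            (by linarith : -e ≤ t - (p:ℝ)/N) hN0.le]
      · rintro ⟨hpa, hpb⟩
        have hpL : L ≤ (p:ℝ) := Nat.ceil_le.1 hpa
        have hpU : (p:ℝ) ≤ U := le_trans (Nat.cast_le.2 hpb) (Nat.floor_le hUpos)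
        have hpN2 : (p:ℝ) ≤ (N:ℝ) - 2 := le_trans hpU hU2
        constructor
        · have : p + 2 ≤ N := by
            have : ((p + 2 : ℕ) : ℝ) ≤ (N:ℝ) := by push_cast; linarith
            exact_mod_cast this
          omega
        · rw [abs_le]
          have hplow : t - e ≤ (p:ℝ)/N := by
            rw [le_div_iff₀ hN0]; nlinarith
          have hphigh : (p:ℝ)/N ≤ t + e := by
            rw [div_le_iff₀ hN0]; nlinarith
          constructor <;> [linarith; linarith]
    have haL : (a:ℝ) < L + 1 := Nat.ceil_lt_add_one hL.le
    have hbU : U < (b:ℝ) + 1 := Nat.lt_floor_add_one U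
    have hLa : L ≤ (a:ℝ) := Nat.le_ceil L
    have hUb : (b:ℝ) ≤ U := Nat.floor_le hUpos
    have hUL : L + 2 ≤ U := by linarith
    have hab : a ≤ b + 1 := by
      have : (a:ℝ) ≤ ((b:ℝ) + 1) := by linarith
      exact_mod_cast this
    have hcK : ((vN t γ N).card : ℝ) = (b:ℝ) + 1 - a := by
      rw [hvN, Nat.card_Icc, Nat.cast_sub hab]
      push_cast; ring
    rw [hcK]
    constructor
    · linarith [hNe, hrpow1]
    · linarith [hNe, hrpow1]
  -- the rewritten expression
  have heq : ∀ᶠ N : ℕ in atTop,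
      (1 / 2 : ℝ) * ((1 - γ) -
        Real.log (∫ ω, ∑ p ∈ vN t γ N,
          (X ((p : ℝ) / N) ω - 2 * X (((p : ℝ) + 1) / N) ω
            + X (((p : ℝ) + 2) / N) ω) ^ 2 ∂P) / Real.log N)
      = (1 / 2 : ℝ) * ((1 - γ) -
          (Real.log ((vN t γ N).card : ℝ) / Real.log N
            + Real.log C / Real.log N - 2 * H)) := by
    filter_upwards [hcard, ev3, ev4, ev5] with N hKb hrpow1 h2 hlog
    have hN0 : (0:ℝ) < N := by
      have : (0:ℕ) < N := by omega
      exact_mod_cast this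
    have hK1 : (1:ℝ) ≤ ((vN t γ N).card : ℝ) := le_trans hrpow1 hKb.1
    have hKne : ((vN t γ N).card : ℝ) ≠ 0 := by linarith
    have hrpos : (0:ℝ) < ((N:ℝ)⁻¹) ^ (2 * H) := Real.rpow_pos_of_pos (by positivity) _
    rw [hEV N (by omega), Real.log_mul hKne (by positivity),
        Real.log_mul (ne_of_gt hCpos) (ne_of_gt hrpos),
        Real.log_rpow (by positivity), Real.log_inv]
    have hlogne : Real.log N ≠ 0 := ne_of_gt hlog
    have : (Real.log ((vN t γ N).card : ℝ) + (Real.log C + 2 * H * (-Real.log N)))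
        / Real.log N
        = Real.log ((vN t γ N).card : ℝ) / Real.log N
          + Real.log C / Real.log N - 2 * H := by
      field_simp
      ring
    rw [this]
  -- the limit of log(card)/log N
  have h3t : Tendsto (fun N : ℕ => Real.log 3 / Real.log N) atTop (nhds 0) :=
    tendsto_const_nhds.div_atTop hlogN
  have hKt : Tendsto (fun N : ℕ =>
      Real.log ((vN t γ N).card : ℝ) / Real.log N) atTop (nhds (1 - γ)) := by
    apply tendsto_of_tendsto_of_tendsto_of_le_of_le'
      (g := fun _ : ℕ => (1 - γ))
      (h := fun N : ℕ => (1 - γ) + Real.log 3 / Real.log N)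
      tendsto_const_nhds
      (by simpa using (tendsto_const_nhds (x := (1 - γ))).add h3t)
    · filter_upwards [hcard, ev4, ev5] with N hKb h2 hlog
      have hN0 : (0:ℝ) < N := by
        have : (0:ℕ) < N := by omega
        exact_mod_cast this
      have hrp : (0:ℝ) < (N:ℝ) ^ (1 - γ) := Real.rpow_pos_of_pos hN0 _
      have hlogK : (1 - γ) * Real.log N ≤ Real.log ((vN t γ N).card : ℝ) := by
        have := Real.log_le_log hrp hKb.1
        rwa [Real.log_rpow hN0] at this
      rw [le_div_iff₀ hlog]
      exact hlogK
    · filter_upwards [hcard, ev3, ev4, ev5] with N hKb hrpow1 h2 hlog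
      have hN0 : (0:ℝ) < N := by
        have : (0:ℕ) < N := by omega
        exact_mod_cast this
      have hK1 : (1:ℝ) ≤ ((vN t γ N).card : ℝ) := le_trans hrpow1 hKb.1
      have hlogK : Real.log ((vN t γ N).card : ℝ)
          ≤ Real.log 3 + (1 - γ) * Real.log N := by
        have h := Real.log_le_log (by linarith) hKb.2
        rwa [Real.log_mul (by norm_num) (by positivity), Real.log_rpow hN0] at h
      rw [div_le_iff₀ hlog, add_mul, div_mul_cancel₀ _ (ne_of_gt hlog)]
      linarith
  have hCt : Tendsto (fun N : ℕ => Real.log C / Real.log N) atTop (nhds 0) :=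
    tendsto_const_nhds.div_atTop hlogN
  have hmain : Tendsto (fun N : ℕ =>
      (1 / 2 : ℝ) * ((1 - γ) -
        (Real.log ((vN t γ N).card : ℝ) / Real.log N
          + Real.log C / Real.log N - 2 * H))) atTop (nhds H) := by
    have h := (tendsto_const_nhds (x := (1 - γ)) (f := atTop)).sub
      ((hKt.add hCt).sub_const (2 * H))
    have h2 := h.const_mul (1/2 : ℝ)
    convert h2 using 2
    ring
  exact hmain.congr' (heq.mono fun N hN => hN.symm)
end

section
/- Let X be a centered field with fractional Brownian field covariance of Hurst parameter H and scale σ on ℝ². Let e₀ = 1, e₁ = −2, e₂ = 1 and for k = (k₁, k₂) ∈ {0,1,2}² put d_k = e_{k₁} e_{k₂}. Then for every x ∈ ℝ² and every integer N ≥ 1, E((Σ_{k ∈ {0,1,2}²} d_k X(x + k/N))²) = c_H σ² N^{−2H}, where c_H = −(1/2) Σ_{k ∈ {0,1,2}²} Σ_{k' ∈ {0,1,2}²} d_k d_{k'} ‖k − k'‖^{2H}. In particular this expectation does not depend on x. -/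
open MeasureTheory

/-- The second-difference coefficients `e₀ = 1`, `e₁ = -2`, `e₂ = 1`. -/
noncomputable def ee : Fin 3 → ℝ := ![1, -2, 1]

/-- The product coefficients `d_k = e_{k₁} e_{k₂}` for `k ∈ {0,1,2}²`. -/
noncomputable def dd (k : Fin 3 × Fin 3) : ℝ := ee k.1 * ee k.2

/-- The lattice point `k = (k₁, k₂) ∈ {0,1,2}²` viewed as a point of `ℝ²`. -/
noncomputable def kvec (k : Fin 3 × Fin 3) : EuclideanSpace ℝ (Fin 2) :=
  WithLp.toLp 2 ![((k.1 : ℕ) : ℝ), ((k.2 : ℕ) : ℝ)]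

lemma dd_sum_zero : ∑ k : Fin 3 × Fin 3, dd k = 0 := by
  simp only [dd, Fintype.sum_prod_type, ← Finset.sum_mul, ← Finset.mul_sum]
  norm_num [ee, Fin.sum_univ_three, Matrix.cons_val, Matrix.cons_val_two, Matrix.vecHead, Matrix.vecTail]

lemma mul_memLp {Ω : Type*} [MeasurableSpace Ω] {P : Measure Ω} {f g : Ω → ℝ}
    (hf : MemLp f 2 P) (hg : MemLp g 2 P) :
    Integrable (fun ω => f ω * g ω) P := by
  have h : MemLp (f • g) 1 P := hg.smul hf (hpqr := ⟨by rw [inv_one]; exact ENNReal.inv_two_add_inv_two⟩)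
  rw [memLp_one_iff_integrable] at h
  exact h

/-- For a centered field with fBf covariance of Hurst parameter `H` and
scale `σ` on `ℝ²`, the expected squared two-dimensional second-order increment satisfies
`E((Σ_k d_k X(x + k/N))²) = c_H σ² N^(-2H)` with
`c_H = -(1/2) Σ_k Σ_k' d_k d_k' ‖k - k'‖^(2H)`; in particular it does not depend on `x`. -/
theorem fbf_planar_second_order_increment
    {Ω : Type*} [MeasurableSpace Ω] (P : Measure Ω) [IsProbabilityMeasure P]
    (H σ : ℝ) (hH : H ∈ Set.Ioo (0 : ℝ) 1) (hσ : 0 < σ)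
    (X : EuclideanSpace ℝ (Fin 2) → Ω → ℝ)
    (hL2 : ∀ t, MemLp (X t) 2 P)
    (hmean : ∀ t, ∫ ω, X t ω ∂P = 0)
    (hcov : ∀ s t, ∫ ω, X s ω * X t ω ∂P
      = (σ ^ 2 / 2) * (‖s‖ ^ (2 * H) + ‖t‖ ^ (2 * H) - ‖s - t‖ ^ (2 * H))) :
    ∀ (x : EuclideanSpace ℝ (Fin 2)) (N : ℕ), 1 ≤ N →
      ∫ ω, (∑ k : Fin 3 × Fin 3, dd k * X (x + ((N : ℝ))⁻¹ • kvec k) ω) ^ 2 ∂P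
        = (-(1 / 2 : ℝ) * ∑ k : Fin 3 × Fin 3, ∑ k' : Fin 3 × Fin 3,
              dd k * dd k' * ‖kvec k - kvec k'‖ ^ (2 * H))
            * σ ^ 2 * (N : ℝ) ^ (-(2 * H)) := by
  intro x N hN
  have hN0 : (0:ℝ) < N := by exact_mod_cast Nat.lt_of_lt_of_le Nat.zero_lt_one hN
  set s : Fin 3 × Fin 3 → EuclideanSpace ℝ (Fin 2) :=
    fun k => x + ((N : ℝ))⁻¹ • kvec k with hs
  have hint : ∀ k k' : Fin 3 × Fin 3,
      Integrable (fun ω => (dd k * X (s k) ω) * (dd k' * X (s k') ω)) P := by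
    intro k k'
    exact mul_memLp ((hL2 (s k)).const_mul _) ((hL2 (s k')).const_mul _)
  have hnorm : ∀ k k' : Fin 3 × Fin 3,
      ‖s k - s k'‖ ^ (2 * H) = (N : ℝ) ^ (-(2 * H)) * ‖kvec k - kvec k'‖ ^ (2 * H) := by
    intro k k'
    have h1 : s k - s k' = ((N : ℝ))⁻¹ • (kvec k - kvec k') := by
      simp only [hs, smul_sub]
      abel
    rw [h1, norm_smul, Real.norm_eq_abs, abs_of_pos (inv_pos.mpr hN0),
      Real.mul_rpow (le_of_lt (inv_pos.mpr hN0)) (norm_nonneg _),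
      Real.inv_rpow hN0.le, ← Real.rpow_neg hN0.le]
  have hcov' : ∀ k k' : Fin 3 × Fin 3,
      ∫ ω, (dd k * X (s k) ω) * (dd k' * X (s k') ω) ∂P
        = dd k * dd k' * ((σ ^ 2 / 2) *
            (‖s k‖ ^ (2 * H) + ‖s k'‖ ^ (2 * H)
              - (N : ℝ) ^ (-(2 * H)) * ‖kvec k - kvec k'‖ ^ (2 * H))) := by
    intro k k'
    have h2 : (fun ω => (dd k * X (s k) ω) * (dd k' * X (s k') ω))
        = fun ω => (dd k * dd k') * (X (s k) ω * X (s k') ω) := by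
      funext ω; ring
    rw [h2, integral_const_mul, hcov, ← hnorm, mul_assoc]
  calc ∫ ω, (∑ k : Fin 3 × Fin 3, dd k * X (s k) ω) ^ 2 ∂P
      = ∫ ω, ∑ k : Fin 3 × Fin 3, ∑ k' : Fin 3 × Fin 3,
          (dd k * X (s k) ω) * (dd k' * X (s k') ω) ∂P := by
        congr 1; funext ω
        rw [sq, Finset.sum_mul_sum]
    _ = ∑ k : Fin 3 × Fin 3, ∑ k' : Fin 3 × Fin 3,
          ∫ ω, (dd k * X (s k) ω) * (dd k' * X (s k') ω) ∂P := by
        rw [integral_finset_sum _ fun k _ => integrable_finset_sum _ fun k' _ => hint k k']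
        exact Finset.sum_congr rfl fun k _ =>
          integral_finset_sum _ fun k' _ => hint k k'
    _ = ∑ k : Fin 3 × Fin 3, ∑ k' : Fin 3 × Fin 3,
          dd k * dd k' * ((σ ^ 2 / 2) *
            (‖s k‖ ^ (2 * H) + ‖s k'‖ ^ (2 * H)
              - (N : ℝ) ^ (-(2 * H)) * ‖kvec k - kvec k'‖ ^ (2 * H))) := by
        exact Finset.sum_congr rfl fun k _ => Finset.sum_congr rfl fun k' _ => hcov' k k'
    _ = (σ ^ 2 / 2) * (
          (∑ k : Fin 3 × Fin 3, dd k * ‖s k‖ ^ (2 * H)) * (∑ k : Fin 3 × Fin 3, dd k)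
          + (∑ k : Fin 3 × Fin 3, dd k) * (∑ k : Fin 3 × Fin 3, dd k * ‖s k‖ ^ (2 * H))
          - (N : ℝ) ^ (-(2 * H)) * ∑ k : Fin 3 × Fin 3, ∑ k' : Fin 3 × Fin 3,
              dd k * dd k' * ‖kvec k - kvec k'‖ ^ (2 * H)) := by
        rw [Finset.sum_mul_sum, Finset.sum_mul_sum]
        simp only [Finset.mul_sum, ← Finset.sum_add_distrib, ← Finset.sum_sub_distrib]
        exact Finset.sum_congr rfl fun k _ => Finset.sum_congr rfl fun k' _ => by ring
    _ = (-(1 / 2 : ℝ) * ∑ k : Fin 3 × Fin 3, ∑ k' : Fin 3 × Fin 3,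
              dd k * dd k' * ‖kvec k - kvec k'‖ ^ (2 * H))
            * σ ^ 2 * (N : ℝ) ^ (-(2 * H)) := by
        rw [dd_sum_zero]
        ring
end

section
/- For every integer d ≥ 1 and every real H ∈ (0, 1], the fractional Brownian field kernel K(s, t) = ‖s‖^{2H} + ‖t‖^{2H} − ‖s − t‖^{2H} on ℝ^d is positive semidefinite: for every n ≥ 1, all points t₁, …, t_n ∈ ℝ^d and all real coefficients a₁, …, a_n, one has Σ_{i=1}^n Σ_{j=1}^n a_i a_j (‖t_i‖^{2H} + ‖t_j‖^{2H} − ‖t_i − t_j‖^{2H}) ≥ 0. (This is the positive semidefiniteness underlying the existence of the fractional Brownian field of Hurst parameter H.) -/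
open scoped BigOperators

lemma gram_pow_nonneg {n d : ℕ} (s : Fin n → EuclideanSpace ℝ (Fin d)) (a : Fin n → ℝ) (k : ℕ) :
    0 ≤ ∑ i, ∑ j, a i * a j * (inner ℝ (s i) (s j) : ℝ) ^ k := by
  have hinner : ∀ i j, (inner ℝ (s i) (s j) : ℝ) = ∑ l, s i l * s j l := by
    intro i j
    simp [PiLp.inner_apply, RCLike.inner_apply, mul_comm]
  set A : Fin n → (Fin k → Fin d) → ℝ := fun i p => a i * ∏ m, s i (p m) with hA
  have step1 : ∀ i j : Fin n, a i * a j * (inner ℝ (s i) (s j) : ℝ) ^ k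
      = ∑ p : Fin k → Fin d, A i p * A j p := by
    intro i j
    rw [hinner, Finset.sum_pow', Fintype.piFinset_univ, Finset.mul_sum]
    refine Finset.sum_congr rfl fun p _ => ?_
    rw [hA]; simp only []
    rw [Finset.prod_mul_distrib]; ring
  calc ∑ i, ∑ j, a i * a j * (inner ℝ (s i) (s j) : ℝ) ^ k
      = ∑ i, ∑ j, ∑ p : Fin k → Fin d, A i p * A j p :=
        Finset.sum_congr rfl fun i _ => Finset.sum_congr rfl fun j _ => step1 i j
    _ = ∑ i, ∑ p : Fin k → Fin d, ∑ j, A i p * A j p :=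
        Finset.sum_congr rfl fun i _ => Finset.sum_comm
    _ = ∑ p : Fin k → Fin d, ∑ i, ∑ j, A i p * A j p := Finset.sum_comm
    _ = ∑ p : Fin k → Fin d, (∑ i, A i p) ^ 2 :=
        Finset.sum_congr rfl fun p _ => by rw [sq, Finset.sum_mul_sum]
    _ ≥ 0 := Finset.sum_nonneg fun p _ => sq_nonneg _

lemma exp_kernel_nonneg {n d : ℕ} (s : Fin n → EuclideanSpace ℝ (Fin d)) (a : Fin n → ℝ) :
    0 ≤ ∑ i, ∑ j, a i * a j * (Real.exp (inner ℝ (s i) (s j) : ℝ) - 1) := by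
  have hsum : ∀ x : ℝ, Summable (fun m : ℕ => x ^ (m + 1) / (Nat.factorial (m + 1) : ℝ)) := fun x =>
    (summable_nat_add_iff 1).2 (Real.summable_pow_div_factorial x)
  have hexp : ∀ x : ℝ, Real.exp x - 1 = ∑' m : ℕ, x ^ (m + 1) / (Nat.factorial (m + 1) : ℝ) := by
    intro x
    have h0 : Real.exp x = ∑' m : ℕ, x ^ m / (Nat.factorial m : ℝ) := by
      rw [Real.exp_eq_exp_ℝ, NormedSpace.exp_eq_tsum_div]
    rw [h0, Summable.tsum_eq_zero_add (Real.summable_pow_div_factorial x)]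
    simp
  have key : ∑ i, ∑ j, a i * a j * (Real.exp (inner ℝ (s i) (s j) : ℝ) - 1)
      = ∑' m : ℕ, ∑ i, ∑ j, a i * a j * ((inner ℝ (s i) (s j) : ℝ) ^ (m + 1) / (Nat.factorial (m + 1) : ℝ)) := by
    rw [eq_comm, Summable.tsum_finsetSum (fun i _ => summable_sum fun j _ => (hsum _).mul_left _)]
    refine Finset.sum_congr rfl fun i _ => ?_
    rw [Summable.tsum_finsetSum (fun j _ => (hsum _).mul_left _)]
    refine Finset.sum_congr rfl fun j _ => ?_
    rw [tsum_mul_left, ← hexp]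
  rw [key]
  refine tsum_nonneg fun m => ?_
  have h := gram_pow_nonneg s a (m + 1)
  have : ∑ i, ∑ j, a i * a j * ((inner ℝ (s i) (s j) : ℝ) ^ (m + 1) / (Nat.factorial (m + 1) : ℝ))
      = (∑ i, ∑ j, a i * a j * (inner ℝ (s i) (s j) : ℝ) ^ (m + 1)) / (Nat.factorial (m + 1) : ℝ) := by
    rw [Finset.sum_div]
    exact Finset.sum_congr rfl fun i _ => by rw [Finset.sum_div]; exact Finset.sum_congr rfl fun j _ => by ring
  rw [this]
  positivity

lemma gauss_kernel_nonneg {n d : ℕ} (t : Fin n → EuclideanSpace ℝ (Fin d)) (a : Fin n → ℝ)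
    {l : ℝ} (hl : 0 ≤ l) :
    0 ≤ ∑ i, ∑ j, a i * a j *
      (1 - Real.exp (-(l * ‖t i‖ ^ 2)) - Real.exp (-(l * ‖t j‖ ^ 2))
        + Real.exp (-(l * ‖t i - t j‖ ^ 2))) := by
  set b : Fin n → ℝ := fun i => Real.exp (-(l * ‖t i‖ ^ 2)) with hb
  set s : Fin n → EuclideanSpace ℝ (Fin d) := fun i => Real.sqrt (2 * l) • t i with hs
  have h2l : (0:ℝ) ≤ 2 * l := by linarith
  have hinner : ∀ i j, (inner ℝ (s i) (s j) : ℝ) = 2 * l * (inner ℝ (t i) (t j) : ℝ) := by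
    intro i j
    rw [hs]
    rw [real_inner_smul_left, real_inner_smul_right, ← mul_assoc, Real.mul_self_sqrt h2l]
  have hdecomp : ∀ i j, 1 - b i - b j + Real.exp (-(l * ‖t i - t j‖ ^ 2))
      = (1 - b i) * (1 - b j) + (b i * b j) * (Real.exp (inner ℝ (s i) (s j) : ℝ) - 1) := by
    intro i j
    have hn : ‖t i - t j‖ ^ 2 = ‖t i‖ ^ 2 - 2 * (inner ℝ (t i) (t j) : ℝ) + ‖t j‖ ^ 2 :=
      norm_sub_sq_real _ _
    have he : Real.exp (-(l * ‖t i - t j‖ ^ 2)) = b i * b j * Real.exp ((inner ℝ (s i) (s j) : ℝ)) := by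
      rw [hinner, hn, hb]
      simp only []
      rw [← Real.exp_add, ← Real.exp_add]
      ring_nf
    rw [he]; ring
  have hsplit : ∑ i, ∑ j, a i * a j *
        (1 - Real.exp (-(l * ‖t i‖ ^ 2)) - Real.exp (-(l * ‖t j‖ ^ 2))
          + Real.exp (-(l * ‖t i - t j‖ ^ 2)))
      = (∑ i, a i * (1 - b i)) ^ 2
        + ∑ i, ∑ j, (a i * b i) * (a j * b j) * (Real.exp (inner ℝ (s i) (s j) : ℝ) - 1) := by
    rw [sq, Finset.sum_mul_sum, ← Finset.sum_add_distrib]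
    refine Finset.sum_congr rfl fun i _ => ?_
    rw [← Finset.sum_add_distrib]
    refine Finset.sum_congr rfl fun j _ => ?_
    have hbi : ∀ k, Real.exp (-(l * ‖t k‖ ^ 2)) = b k := fun k => rfl
    rw [hbi i, hbi j]
    linear_combination (a i * a j) * hdecomp i j
  rw [hsplit]
  exact add_nonneg (sq_nonneg _) (exp_kernel_nonneg s fun i => a i * b i)

open MeasureTheory Set in
lemma fbf_base_integrable {H : ℝ} (hH0 : 0 < H) (hH1 : H < 1) :
    IntegrableOn (fun u : ℝ => (1 - Real.exp (-u)) * u ^ (-1 - H)) (Ioi (0:ℝ)) := by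
  have hmeas : ∀ S : Set ℝ, MeasurableSet S → S ⊆ Ioi 0 →
      AEStronglyMeasurable (fun u : ℝ => (1 - Real.exp (-u)) * u ^ (-1 - H))
        (volume.restrict S) := by
    intro S hS hsub
    refine ContinuousOn.aestronglyMeasurable ?_ hS
    refine ContinuousOn.mul (Continuous.continuousOn (by continuity)) ?_
    intro x hx
    exact (Real.continuousAt_rpow_const x _ (Or.inl (ne_of_gt (hsub hx)))).continuousWithinAt
  have hnonneg : ∀ u : ℝ, 0 < u → 0 ≤ (1 - Real.exp (-u)) * u ^ (-1 - H) := by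
    intro u hu
    apply mul_nonneg _ (Real.rpow_nonneg hu.le _)
    have : Real.exp (-u) ≤ 1 := by
      rw [← Real.exp_zero]; exact Real.exp_le_exp.2 (by linarith)
    linarith
  have hbound : ∀ u : ℝ, 0 < u → 1 - Real.exp (-u) ≤ u := by
    intro u hu
    have := Real.add_one_le_exp (-u)
    linarith
  have h01 : IntegrableOn (fun u : ℝ => (1 - Real.exp (-u)) * u ^ (-1 - H)) (Ioc (0:ℝ) 1) := by
    have hd : IntegrableOn (fun u : ℝ => u ^ (-H)) (Ioc (0:ℝ) 1) := by
      have := intervalIntegral.intervalIntegrable_rpow' (a := 0) (b := 1)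
        (show (-1:ℝ) < -H by linarith)
      rwa [intervalIntegrable_iff_integrableOn_Ioc_of_le zero_le_one] at this
    refine Integrable.mono' hd (hmeas _ measurableSet_Ioc Ioc_subset_Ioi_self) ?_
    filter_upwards [ae_restrict_mem measurableSet_Ioc] with u hu
    have hu0 : 0 < u := hu.1
    rw [Real.norm_eq_abs, abs_of_nonneg (hnonneg u hu0)]
    calc (1 - Real.exp (-u)) * u ^ (-1 - H) ≤ u * u ^ (-1 - H) :=
          mul_le_mul_of_nonneg_right (hbound u hu0) (Real.rpow_nonneg hu0.le _)
      _ = u ^ (-H) := by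
          rw [← Real.rpow_one_add' hu0.le (by linarith : (1:ℝ) + (-1 - H) ≠ 0)]
          congr 1; ring
  have h1i : IntegrableOn (fun u : ℝ => (1 - Real.exp (-u)) * u ^ (-1 - H)) (Ioi (1:ℝ)) := by
    have hd : IntegrableOn (fun u : ℝ => u ^ (-1 - H)) (Ioi (1:ℝ)) :=
      integrableOn_Ioi_rpow_of_lt (by linarith) one_pos
    refine Integrable.mono' hd (hmeas _ measurableSet_Ioi fun x hx => mem_Ioi.2 (lt_trans one_pos hx)) ?_
    filter_upwards [ae_restrict_mem measurableSet_Ioi] with u hu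
    have hu0 : (0:ℝ) < u := lt_trans one_pos hu
    rw [Real.norm_eq_abs, abs_of_nonneg (hnonneg u hu0)]
    have : Real.exp (-u) ≥ 0 := (Real.exp_pos _).le
    calc (1 - Real.exp (-u)) * u ^ (-1 - H) ≤ 1 * u ^ (-1 - H) :=
          mul_le_mul_of_nonneg_right (by linarith) (Real.rpow_nonneg hu0.le _)
      _ = u ^ (-1 - H) := one_mul _
  have : Ioi (0:ℝ) = Ioc 0 1 ∪ Ioi 1 := (Ioc_union_Ioi_eq_Ioi zero_le_one).symm
  rw [this]
  exact h01.union h1i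

open MeasureTheory Set in
lemma fbf_integrable {H : ℝ} (hH0 : 0 < H) (hH1 : H < 1) {r : ℝ} (hr : 0 ≤ r) :
    IntegrableOn (fun l : ℝ => (1 - Real.exp (-(l * r))) * l ^ (-1 - H)) (Ioi (0:ℝ)) := by
  rcases eq_or_lt_of_le hr with h0 | hr
  · simp [← h0]
  · have hcongr : ∀ l ∈ Ioi (0:ℝ), (1 - Real.exp (-(l * r))) * l ^ (-1 - H)
        = r ^ ((1:ℝ) + H) * ((1 - Real.exp (-(r * l))) * (r * l) ^ (-1 - H)) := by
      intro l hl
      have hl0 : (0:ℝ) < l := hl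
      rw [Real.mul_rpow hr.le hl0.le, mul_comm l r]
      rw [show r ^ ((1:ℝ) + H) * ((1 - Real.exp (-(r * l))) * (r ^ (-1 - H) * l ^ (-1 - H)))
          = (r ^ ((1:ℝ) + H) * r ^ (-1 - H)) * ((1 - Real.exp (-(r * l))) * l ^ (-1 - H)) by ring]
      rw [← Real.rpow_add hr]
      norm_num
    rw [integrableOn_congr_fun hcongr measurableSet_Ioi]
    apply Integrable.const_mul
    refine (integrableOn_Ioi_comp_mul_left_iff
      (fun u : ℝ => (1 - Real.exp (-u)) * u ^ (-1 - H)) 0 hr).2 ?_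
    rw [mul_zero]
    exact fbf_base_integrable hH0 hH1

open MeasureTheory Set in
lemma fbf_scaling {H : ℝ} (hH0 : 0 < H) (hH1 : H < 1) {r : ℝ} (hr : 0 ≤ r) :
    ∫ l in Ioi (0:ℝ), (1 - Real.exp (-(l * r))) * l ^ (-1 - H)
      = (∫ u in Ioi (0:ℝ), (1 - Real.exp (-u)) * u ^ (-1 - H)) * r ^ H := by
  rcases eq_or_lt_of_le hr with h0 | hr
  · rw [← h0]
    simp [Real.zero_rpow (ne_of_gt hH0)]
  · have hcongr : ∀ l ∈ Ioi (0:ℝ), (1 - Real.exp (-(l * r))) * l ^ (-1 - H)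
        = r ^ ((1:ℝ) + H) * ((1 - Real.exp (-(r * l))) * (r * l) ^ (-1 - H)) := by
      intro l hl
      have hl0 : (0:ℝ) < l := hl
      rw [Real.mul_rpow hr.le hl0.le, mul_comm l r]
      rw [show r ^ ((1:ℝ) + H) * ((1 - Real.exp (-(r * l))) * (r ^ (-1 - H) * l ^ (-1 - H)))
          = (r ^ ((1:ℝ) + H) * r ^ (-1 - H)) * ((1 - Real.exp (-(r * l))) * l ^ (-1 - H)) by ring]
      rw [← Real.rpow_add hr]
      norm_num
    rw [setIntegral_congr_fun measurableSet_Ioi hcongr, integral_const_mul]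
    have key := integral_comp_mul_left_Ioi
      (fun u : ℝ => (1 - Real.exp (-u)) * u ^ (-1 - H)) 0 hr
    rw [mul_zero] at key
    rw [key, smul_eq_mul]
    rw [show r ^ ((1:ℝ) + H) * (r⁻¹ * ∫ u in Ioi (0:ℝ), (1 - Real.exp (-u)) * u ^ (-1 - H))
        = (r ^ ((1:ℝ) + H) * r⁻¹) * ∫ u in Ioi (0:ℝ), (1 - Real.exp (-u)) * u ^ (-1 - H) by ring]
    rw [← Real.rpow_neg_one r, ← Real.rpow_add hr]
    rw [show (1:ℝ) + H + -1 = H by ring]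
    ring

open MeasureTheory Set in
lemma fbf_const_pos {H : ℝ} (hH0 : 0 < H) (hH1 : H < 1) :
    0 < ∫ u in Ioi (0:ℝ), (1 - Real.exp (-u)) * u ^ (-1 - H) := by
  have hpos : ∀ u : ℝ, 0 < u → 0 < (1 - Real.exp (-u)) * u ^ (-1 - H) := by
    intro u hu
    apply mul_pos _ (Real.rpow_pos_of_pos hu _)
    have : Real.exp (-u) < 1 := by
      rw [← Real.exp_zero]; exact Real.exp_lt_exp.2 (by linarith)
    linarith
  have hae : 0 ≤ᵐ[volume.restrict (Ioi (0:ℝ))]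
      fun u : ℝ => (1 - Real.exp (-u)) * u ^ (-1 - H) := by
    filter_upwards [ae_restrict_mem measurableSet_Ioi] with u hu
    exact (hpos u hu).le
  rw [setIntegral_pos_iff_support_of_nonneg_ae hae (fbf_base_integrable hH0 hH1)]
  have hsub : Ioi (0:ℝ) ⊆ Function.support (fun u : ℝ => (1 - Real.exp (-u)) * u ^ (-1 - H)) ∩ Ioi 0 :=
    fun u hu => ⟨ne_of_gt (hpos u hu), hu⟩
  calc (0:ENNReal) < volume (Ioi (0:ℝ)) := by simp [Real.volume_Ioi]
    _ ≤ _ := measure_mono hsub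

open MeasureTheory Set

/-- For every `d ≥ 1` and every `H ∈ (0,1]`, the fractional Brownian
field kernel `K(s,t) = ‖s‖^(2H) + ‖t‖^(2H) - ‖s - t‖^(2H)` on `ℝ^d` is positive
semidefinite: all finite quadratic forms built from it are nonnegative. -/
theorem fbf_kernel_posSemidef
    (d : ℕ) (hd : 1 ≤ d) (H : ℝ) (hH0 : 0 < H) (hH1 : H ≤ 1) :
    ∀ (n : ℕ), 1 ≤ n → ∀ (t : Fin n → EuclideanSpace ℝ (Fin d)) (a : Fin n → ℝ),
      0 ≤ ∑ i, ∑ j, a i * a j *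
        (‖t i‖ ^ (2 * H) + ‖t j‖ ^ (2 * H) - ‖t i - t j‖ ^ (2 * H)) := by
  intro n hn t a
  rcases lt_or_eq_of_le hH1 with hH1' | h1
  · -- case H < 1
    set g : ℝ → ℝ → ℝ := fun r l => (1 - Real.exp (-(l * r))) * l ^ (-1 - H) with hg
    obtain ⟨C, hCdef, hCpos⟩ :
        ∃ C : ℝ, C = (∫ u in Ioi (0:ℝ), (1 - Real.exp (-u)) * u ^ (-1 - H)) ∧ 0 < C :=
      ⟨_, rfl, fbf_const_pos hH0 hH1'⟩
    have hval : ∀ r : ℝ, 0 ≤ r → (∫ l in Ioi (0:ℝ), g r l) = C * r ^ H := by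
      intro r hr
      rw [hg]
      simp only []
      rw [fbf_scaling hH0 hH1' hr, hCdef, mul_comm]
    have hInt : ∀ r : ℝ, 0 ≤ r → IntegrableOn (g r) (Ioi (0:ℝ)) := by
      intro r hr
      exact fbf_integrable hH0 hH1' hr
    set F : Fin n → Fin n → ℝ → ℝ := fun i j l =>
      a i * a j * (g (‖t i‖ ^ 2) l + g (‖t j‖ ^ 2) l - g (‖t i - t j‖ ^ 2) l) with hF
    have hFint : ∀ i j, IntegrableOn (F i j) (Ioi (0:ℝ)) := by
      intro i j
      exact ((((hInt _ (sq_nonneg _)).add (hInt _ (sq_nonneg _))).sub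
        (hInt _ (sq_nonneg _))).const_mul _)
    have key1 : (∫ l in Ioi (0:ℝ), ∑ i, ∑ j, F i j l) = ∑ i, ∑ j, ∫ l in Ioi (0:ℝ), F i j l := by
      rw [integral_finset_sum _ (fun i _ => integrable_finset_sum _ fun j _ => hFint i j)]
      exact Finset.sum_congr rfl fun i _ => integral_finset_sum _ fun j _ => hFint i j
    have key2 : ∀ i j, (∫ l in Ioi (0:ℝ), F i j l)
        = a i * a j * (C * (‖t i‖ ^ 2 : ℝ) ^ H + C * (‖t j‖ ^ 2 : ℝ) ^ H
            - C * (‖t i - t j‖ ^ 2 : ℝ) ^ H) := by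
      intro i j
      rw [hF]
      simp only []
      have hadd : IntegrableOn (fun l : ℝ => g (‖t i‖ ^ 2) l + g (‖t j‖ ^ 2) l) (Ioi (0:ℝ)) :=
        (hInt _ (sq_nonneg _)).add (hInt _ (sq_nonneg _))
      rw [integral_const_mul,
        integral_sub hadd (hInt _ (sq_nonneg _)),
        integral_add (hInt _ (sq_nonneg _)) (hInt _ (sq_nonneg _)),
        hval _ (sq_nonneg _), hval _ (sq_nonneg _), hval _ (sq_nonneg _)]
    have key3 : ∀ l ∈ Ioi (0:ℝ), 0 ≤ ∑ i, ∑ j, F i j l := by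
      intro l hl
      have hl0 : (0:ℝ) < l := hl
      have hFl : ∀ i j, F i j l
          = (a i * a j * (1 - Real.exp (-(l * ‖t i‖ ^ 2)) - Real.exp (-(l * ‖t j‖ ^ 2))
              + Real.exp (-(l * ‖t i - t j‖ ^ 2)))) * l ^ (-1 - H) := by
        intro i j
        rw [hF, hg]
        simp only []
        ring
      simp_rw [hFl, ← Finset.sum_mul]
      exact mul_nonneg (gauss_kernel_nonneg t a hl0.le) (Real.rpow_nonneg hl0.le _)
    have hnn : 0 ≤ ∫ l in Ioi (0:ℝ), ∑ i, ∑ j, F i j l :=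
      setIntegral_nonneg measurableSet_Ioi key3
    rw [key1] at hnn
    simp_rw [key2] at hnn
    have hrpow : ∀ x : EuclideanSpace ℝ (Fin d), ((‖x‖ ^ 2 : ℝ)) ^ H = ‖x‖ ^ (2 * H) := by
      intro x
      rw [← Real.rpow_natCast ‖x‖ 2, ← Real.rpow_mul (norm_nonneg x)]
      norm_num
    have heq : ∑ i, ∑ j, a i * a j * (C * (‖t i‖ ^ 2 : ℝ) ^ H + C * (‖t j‖ ^ 2 : ℝ) ^ H
            - C * (‖t i - t j‖ ^ 2 : ℝ) ^ H)
        = C * ∑ i, ∑ j, a i * a j *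
            (‖t i‖ ^ (2 * H) + ‖t j‖ ^ (2 * H) - ‖t i - t j‖ ^ (2 * H)) := by
      rw [Finset.mul_sum]
      refine Finset.sum_congr rfl fun i _ => ?_
      rw [Finset.mul_sum]
      refine Finset.sum_congr rfl fun j _ => ?_
      rw [← hrpow, ← hrpow, ← hrpow]
      ring
    rw [heq] at hnn
    nlinarith [hnn, hCpos, mul_pos hCpos hCpos]
  · -- case H = 1
    have h2 : ∀ x : EuclideanSpace ℝ (Fin d), ‖x‖ ^ (2 * H) = ‖x‖ ^ (2:ℕ) := by
      intro x
      rw [h1, mul_one, ← Real.rpow_natCast ‖x‖ 2]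
      norm_num
    have hker : ∀ i j, ‖t i‖ ^ (2:ℕ) + ‖t j‖ ^ (2:ℕ) - ‖t i - t j‖ ^ (2:ℕ)
        = 2 * (inner ℝ (t i) (t j) : ℝ) := by
      intro i j
      have := norm_sub_sq_real (t i) (t j)
      linarith
    simp_rw [h2, hker]
    have hgram := gram_pow_nonneg t a 1
    simp_rw [pow_one] at hgram
    have : ∑ i, ∑ j, a i * a j * (2 * (inner ℝ (t i) (t j) : ℝ))
        = 2 * ∑ i, ∑ j, a i * a j * (inner ℝ (t i) (t j) : ℝ) := by
      rw [Finset.mul_sum]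
      refine Finset.sum_congr rfl fun i _ => ?_
      rw [Finset.mul_sum]
      exact Finset.sum_congr rfl fun j _ => by ring
    rw [this]
    linarith
end
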